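/- Consider the infinite 3-regular tree with a fixed root x, whose three branches are labeled. Define u to be 0 at the root and on all vertices of the first branch, u(v) = 2 − 1/2^{n−1} for every vertex v at distance n ≥ 1 from the root in the second branch, and u(v) = −(2 − 1/2^{n−1}) for every vertex v at distance n ≥ 1 in the third branch. Then u is a non-constant harmonic function, its values lie in [−2,2], and the Almgren quantity N(k) = ∑_{d(x,y)=k+1} u(y)² − 2·∑_{d(x,y)=k} u(y)² equals 8 − 3/2^{k−1} for every k ≥ 1; in particular N(k) is non-negative, strictly increasing, and converges to 8. -/

import Mathlib

/-- Vertices of the rooted 3-regular tree with labeled branches: `none` is the root `x`;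
`some (b, l)` is the vertex of branch `b ∈ Fin 3` reached from the root by first moving
into branch `b` and then following the steps recorded in `l` (each subsequent vertex has
two children, so steps are labeled by `Fin 2`; the vertex `some (b, l)` is at distance
`l.length + 1` from the root). -/
abbrev TreeVertex : Type := Option (Fin 3 × List (Fin 2))

/-- Adjacency in the rooted 3-regular tree. -/
def treeAdj : TreeVertex → TreeVertex → Prop
  | none, none => False
  | none, some (_, l) => l = []
  | some (_, l), none => l = []
  | some (b, l), some (b', l') => b = b' ∧ ∃ s : Fin 2, l' = s :: l ∨ l = s :: l'

/-- The infinite 3-regular tree (with labeled branches), as a simple graph. -/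
def treeGraph : SimpleGraph TreeVertex where
  Adj := treeAdj
  symm := by
    refine ⟨?_⟩
    intro a b h
    match a, b with
    | none, some (c, l) => exact h
    | some (c, l), none => exact h
    | some (c, l), some (c', l') =>
      obtain ⟨hb, s, hs⟩ := h
      exact ⟨hb.symm, s, hs.symm⟩
  loopless := by
    refine ⟨?_⟩
    rintro (_ | ⟨b, l⟩) h
    · exact h
    · obtain ⟨-, s, hs⟩ := h
      rcases hs with hs | hs <;> exact absurd (congrArg List.length hs) (by simp)

/-- The harmonic function from the paper: `0` on the root and on the first branch,
`2 − 1/2^{n−1}` at distance `n` on the second branch, and `−(2 − 1/2^{n−1})` at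
distance `n` on the third branch (the vertex `some (b, l)` is at distance
`n = l.length + 1`). -/
noncomputable def treeU : TreeVertex → ℝ
  | none => 0
  | some (b, l) =>
    if b = 0 then 0
    else if b = 1 then 2 - 1 / 2 ^ l.length
    else -(2 - 1 / 2 ^ l.length)

/-- The Almgren quantity for the 3-regular tree (here `d_in ≡ 1`, `d_out ≡ 2` away from
the root): `N(k) = ∑_{d(x,y)=k+1} u(y)² − 2∑_{d(x,y)=k} u(y)²`. -/
noncomputable def treeN (k : ℕ) : ℝ :=
  (∑ᶠ y ∈ {y : TreeVertex | treeGraph.dist none y = k + 1}, treeU y ^ 2) -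
    2 * ∑ᶠ y ∈ {y : TreeVertex | treeGraph.dist none y = k}, treeU y ^ 2

open SimpleGraph

def depth : TreeVertex → ℕ
  | none => 0
  | some (_, l) => l.length + 1

def parent : TreeVertex → TreeVertex
  | none => none
  | some (_, []) => none
  | some (b, _ :: l) => some (b, l)

lemma depth_parent (b : Fin 3) (l : List (Fin 2)) :
    depth (parent (some (b, l))) + 1 = depth (some (b, l)) := by
  cases l <;> simp [depth, parent]

lemma parent_adj (b : Fin 3) (l : List (Fin 2)) :
    treeGraph.Adj (parent (some (b, l))) (some (b, l)) := by
  cases l with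
  | nil => show treeAdj none (some (b, [])); trivial
  | cons s l => exact ⟨rfl, s, Or.inl rfl⟩

lemma depth_of_adj {a b : TreeVertex} (h : treeGraph.Adj a b) :
    depth a = depth b + 1 ∨ depth b = depth a + 1 := by
  match a, b with
  | none, none => exact absurd h (by simp [treeGraph, treeAdj])
  | none, some (c, l) =>
    right; have : l = [] := h; simp [this, depth]
  | some (c, l), none =>
    left; have : l = [] := h; simp [this, depth]
  | some (c, l), some (c', l') =>
    obtain ⟨-, s, hs | hs⟩ := h
    · right; simp [hs, depth]
    · left; simp [hs, depth]

lemma eq_parent_of_adj {a b : TreeVertex} (h : treeGraph.Adj a b) (hd : depth a < depth b) :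
    a = parent b := by
  match a, b with
  | none, none => exact absurd h (by simp [treeGraph, treeAdj])
  | none, some (c, l) =>
    have : l = [] := h; simp [this, parent]
  | some (c, l), none => simp [depth] at hd
  | some (c, l), some (c', l') =>
    obtain ⟨hb, s, hs | hs⟩ := h
    · subst hb hs; simp [parent]
    · exfalso; subst hs; simp [depth] at hd

def walkToRoot : (b : Fin 3) → (l : List (Fin 2)) → treeGraph.Walk (some (b, l)) none
  | b, [] => Walk.cons (show treeGraph.Adj (some (b, [])) none from (rfl : ([] : List (Fin 2)) = [])) Walk.nil
  | b, s :: l => Walk.cons (show treeGraph.Adj (some (b, s :: l)) (some (b, l)) from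
      ⟨rfl, s, Or.inr rfl⟩) (walkToRoot b l)

lemma walkToRoot_length (b : Fin 3) (l : List (Fin 2)) :
    (walkToRoot b l).length = l.length + 1 := by
  induction l with
  | nil => rfl
  | cons s l ih => simp [walkToRoot, ih]

lemma treeGraph_connected : treeGraph.Connected := by
  rw [connected_iff_exists_forall_reachable]
  refine ⟨none, ?_⟩
  rintro (_ | ⟨b, l⟩)
  · rfl
  · exact ⟨(walkToRoot b l).reverse⟩

lemma depth_le_of_walk {a b : TreeVertex} (w : treeGraph.Walk a b) :
    depth b ≤ depth a + w.length := by
  induction w with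
  | nil => simp
  | cons h p ih =>
    rcases depth_of_adj h with h1 | h1 <;> simp [Walk.length_cons] <;> omega

lemma dist_eq_depth (v : TreeVertex) : treeGraph.dist none v = depth v := by
  cases v with
  | none => simp [depth]
  | some p =>
    obtain ⟨b, l⟩ := p
    have hr : treeGraph.Reachable none (some (b, l)) := ⟨(walkToRoot b l).reverse⟩
    refine le_antisymm ?_ ?_
    · have := SimpleGraph.dist_le (walkToRoot b l).reverse
      simpa [walkToRoot_length, depth] using this
    · obtain ⟨w, hw⟩ := hr.exists_walk_length_eq_dist
      have := depth_le_of_walk w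
      simp [depth] at this ⊢
      omega

lemma fin3_cases (b : Fin 3) : b = 0 ∨ b = 1 ∨ b = 2 := by omega

lemma fin2_cases (s : Fin 2) : s = 0 ∨ s = 1 := by omega

lemma nbhd_root : treeGraph.neighborSet none =
    ↑({some (0, []), some (1, []), some (2, [])} : Finset TreeVertex) := by
  ext y
  cases y with
  | none => simp [neighborSet]
  | some p =>
    obtain ⟨b, l⟩ := p
    show treeAdj none (some (b, l)) ↔ _
    simp only [treeAdj, Finset.coe_insert, Set.mem_insert_iff, Finset.coe_singleton,
      Set.mem_singleton_iff, Option.some.injEq, Prod.mk.injEq]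
    constructor
    · rintro rfl
      rcases fin3_cases b with rfl | rfl | rfl <;> simp
    · rintro (⟨rfl, rfl⟩ | ⟨rfl, rfl⟩ | ⟨rfl, rfl⟩) <;> rfl

lemma nbhd_some (b : Fin 3) (l : List (Fin 2)) : treeGraph.neighborSet (some (b, l)) =
    ↑({parent (some (b, l)), some (b, 0 :: l), some (b, 1 :: l)} : Finset TreeVertex) := by
  ext y
  simp only [Finset.coe_insert, Set.mem_insert_iff, Finset.coe_singleton, Set.mem_singleton_iff]
  cases y with
  | none =>
    show treeAdj (some (b, l)) none ↔ _
    cases l <;> simp [treeAdj, parent]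
  | some p =>
    obtain ⟨b', l'⟩ := p
    show treeAdj (some (b, l)) (some (b', l')) ↔ _
    simp only [treeAdj]
    constructor
    · rintro ⟨rfl, s, rfl | hs⟩
      · rcases fin2_cases s with rfl | rfl <;> simp
      · left
        rw [hs]; simp [parent]
    · cases l with
      | nil =>
        rintro (h | h | h)
        · simp [parent] at h
        · obtain ⟨rfl, rfl⟩ := Option.some.injEq .. ▸ h; exact ⟨rfl, 0, by simp⟩
        · obtain ⟨rfl, rfl⟩ := Option.some.injEq .. ▸ h; exact ⟨rfl, 1, by simp⟩
      | cons t m =>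
        rintro (h | h | h)
        · simp only [parent, Option.some.injEq, Prod.mk.injEq] at h
          exact ⟨h.1.symm, t, Or.inr (by rw [h.2])⟩
        · obtain ⟨rfl, rfl⟩ := Option.some.injEq .. ▸ h; exact ⟨rfl, 0, by simp⟩
        · obtain ⟨rfl, rfl⟩ := Option.some.injEq .. ▸ h; exact ⟨rfl, 1, by simp⟩

lemma parent_ne_child (b : Fin 3) (l : List (Fin 2)) (s : Fin 2) :
    parent (some (b, l)) ≠ some (b, s :: l) := by
  cases l with
  | nil => simp [parent]
  | cons t m =>
    simp only [parent, ne_eq, Option.some.injEq, Prod.mk.injEq, not_and]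
    intro _
    intro h
    have := congrArg List.length h
    simp at this
    omega

lemma ncard_nbhd (v : TreeVertex) : (treeGraph.neighborSet v).ncard = 3 := by
  cases v with
  | none =>
    rw [nbhd_root, Set.ncard_coe_finset]
    decide
  | some p =>
    obtain ⟨b, l⟩ := p
    rw [nbhd_some, Set.ncard_coe_finset]
    rw [Finset.card_insert_of_notMem (by
      simp only [Finset.mem_insert, Finset.mem_singleton]
      push_neg
      exact ⟨parent_ne_child b l 0, parent_ne_child b l 1⟩)]
    rw [Finset.card_insert_of_notMem (by simp)]
    rfl

lemma treeU_harmonic (v : TreeVertex) :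
    ∑ᶠ y ∈ treeGraph.neighborSet v, (treeU y - treeU v) = 0 := by
  cases v with
  | none =>
    rw [nbhd_root, finsum_mem_coe_finset]
    rw [Finset.sum_insert (by decide), Finset.sum_insert (by decide), Finset.sum_singleton]
    simp [treeU]
  | some p =>
    obtain ⟨b, l⟩ := p
    rw [nbhd_some, finsum_mem_coe_finset]
    rw [Finset.sum_insert (by
      simp only [Finset.mem_insert, Finset.mem_singleton]
      push_neg
      exact ⟨parent_ne_child b l 0, parent_ne_child b l 1⟩)]
    rw [Finset.sum_insert (by simp), Finset.sum_singleton]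
    rcases fin3_cases b with rfl | rfl | rfl
    · cases l <;> simp [treeU, parent]
    · cases l with
      | nil => simp [treeU, parent]; norm_num
      | cons t m =>
        simp only [treeU, parent, List.length_cons, show (1:Fin 3) ≠ 0 by decide,
          if_false, if_true]
        norm_num
        have hx : (0:ℝ) < 2 ^ m.length := by positivity
        field_simp
        ring
    · cases l with
      | nil =>
        simp [treeU, parent, show (2:Fin 3) ≠ 0 by decide, show (2:Fin 3) ≠ 1 by decide]
        norm_num
      | cons t m =>
        simp only [treeU, parent, List.length_cons, show (2:Fin 3) ≠ 0 by decide,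
          show (2:Fin 3) ≠ 1 by decide, if_false, if_true]
        norm_num
        have hx : (0:ℝ) < 2 ^ m.length := by positivity
        field_simp
        ring

/-- The sphere of radius `m+1` as a finset. -/
def sphereFinset (m : ℕ) : Finset TreeVertex :=
  Finset.image (fun q : Fin 3 × (Fin m → Fin 2) => some (q.1, List.ofFn q.2)) Finset.univ

lemma sphere_eq (m : ℕ) :
    {y : TreeVertex | treeGraph.dist none y = m + 1} = ↑(sphereFinset m) := by
  ext y
  simp only [Set.mem_setOf_eq, sphereFinset, Finset.coe_image, Finset.coe_univ, Set.image_univ,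
    Set.mem_range, dist_eq_depth]
  cases y with
  | none => simp [depth]
  | some p =>
    obtain ⟨b, l⟩ := p
    simp only [depth, add_left_inj, Option.some.injEq]
    constructor
    · intro hl
      refine ⟨⟨b, fun i => l.get (Fin.cast hl.symm i)⟩, ?_⟩
      simp only [Prod.mk.injEq, true_and]
      apply List.ext_get (by simp [hl])
      intro n h1 h2
      simp [List.get_ofFn]
    · rintro ⟨⟨b', f⟩, h⟩
      simp only [Option.some.injEq, Prod.mk.injEq] at h
      obtain ⟨rfl, rfl⟩ := h
      simp

lemma sphere_sum (m : ℕ) :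
    ∑ᶠ y ∈ {y : TreeVertex | treeGraph.dist none y = m + 1}, treeU y ^ 2 =
      2 ^ (m + 1) * (2 - 1 / 2 ^ m) ^ 2 := by
  rw [sphere_eq, finsum_mem_coe_finset, sphereFinset]
  rw [Finset.sum_image (by
    rintro ⟨b, f⟩ - ⟨b', f'⟩ - h
    simp only [Option.some.injEq, Prod.mk.injEq] at h
    exact Prod.ext h.1 (List.ofFn_injective h.2))]
  rw [Fintype.sum_prod_type]
  have hval : ∀ (b : Fin 3) (f : Fin m → Fin 2),
      treeU (some (b, List.ofFn f)) ^ 2 = if b = 0 then 0 else (2 - 1 / 2 ^ m) ^ 2 := by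
    intro b f
    rcases fin3_cases b with rfl | rfl | rfl
    · simp [treeU]
    · simp [treeU, show (1:Fin 3) ≠ 0 by decide]
    · simp [treeU, show (2:Fin 3) ≠ 0 by decide, show (2:Fin 3) ≠ 1 by decide]
      ring
  simp only [hval]
  rw [Fin.sum_univ_three]
  simp only [if_pos rfl, if_neg (show (1:Fin 3) ≠ 0 by decide),
    if_neg (show (2:Fin 3) ≠ 0 by decide)]
  simp [Finset.sum_const, Fintype.card_fun]
  ring

lemma sphere_zero_sum :
    ∑ᶠ y ∈ {y : TreeVertex | treeGraph.dist none y = 0}, treeU y ^ 2 = 0 := by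
  have : {y : TreeVertex | treeGraph.dist none y = 0} = {none} := by
    ext y
    simp only [Set.mem_setOf_eq, dist_eq_depth, Set.mem_singleton_iff]
    cases y with
    | none => simp [depth]
    | some p => obtain ⟨b, l⟩ := p; simp [depth]
  rw [this, finsum_mem_singleton]
  simp [treeU]

lemma treeN_formula (k : ℕ) (hk : 1 ≤ k) : treeN k = 8 - 3 / 2 ^ (k - 1) := by
  obtain ⟨m, rfl⟩ : ∃ m, k = m + 1 := ⟨k - 1, by omega⟩
  rw [treeN, sphere_sum, sphere_sum m, Nat.add_sub_cancel]
  have hx : (0:ℝ) < 2 ^ m := by positivity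
  field_simp
  ring

/-- `y` is a (weak) descendant of the vertex `some (b, l)`. -/
def isDesc (b : Fin 3) (l : List (Fin 2)) : TreeVertex → Prop
  | none => False
  | some (b', l') => b' = b ∧ l <:+ l'

lemma isDesc_self (b : Fin 3) (l : List (Fin 2)) : isDesc b l (some (b, l)) :=
  ⟨rfl, List.suffix_refl l⟩

lemma not_isDesc_parent (b : Fin 3) (l : List (Fin 2)) : ¬ isDesc b l (parent (some (b, l))) := by
  cases l with
  | nil => simp [parent, isDesc]
  | cons t m =>
    simp only [parent, isDesc, not_and]
    intro _ h
    have := h.length_le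
    simp at this

lemma isDesc_iff_of_adj {b : Fin 3} {l : List (Fin 2)} {u v : TreeVertex}
    (h : treeGraph.Adj u v)
    (he : s(u, v) ≠ s(parent (some (b, l)), some (b, l))) :
    (isDesc b l u ↔ isDesc b l v) := by
  match u, v with
  | none, none => exact absurd h (by simp [treeGraph, treeAdj])
  | none, some (c, l') =>
    have hl' : l' = [] := h
    subst hl'
    simp only [isDesc, false_iff, not_and]
    rintro rfl h2
    have hl : l = [] := List.suffix_nil.mp h2
    subst hl
    exact he (by simp [parent, Sym2.eq_swap])
  | some (c, l'), none =>
    have hl' : l' = [] := h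
    subst hl'
    simp only [isDesc, iff_false, not_and]
    rintro rfl h2
    have hl : l = [] := List.suffix_nil.mp h2
    subst hl
    exact he (by simp [parent])
  | some (c, l₁), some (c', l₂) =>
    obtain ⟨rfl, s, hs | hs⟩ := h
    · -- l₂ = s :: l₁ : v is a child of u
      subst hs
      simp only [isDesc, and_congr_right_iff]
      intro hb
      subst hb
      constructor
      · exact fun h2 => h2.trans (List.suffix_cons s l₁)
      · intro h2
        rcases List.suffix_cons_iff.mp h2 with rfl | h3
        · exact absurd (by simp [parent]) he
        · exact h3
    · -- l₁ = s :: l₂ : u is a child of v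
      subst hs
      simp only [isDesc, and_congr_right_iff]
      intro hb
      subst hb
      constructor
      · intro h2
        rcases List.suffix_cons_iff.mp h2 with rfl | h3
        · exact absurd (by simp [parent, Sym2.eq_swap]) he
        · exact h3
      · exact fun h2 => h2.trans (List.suffix_cons s l₂)

lemma isDesc_iff_of_reachable {b : Fin 3} {l : List (Fin 2)} {u v : TreeVertex}
    (h : (treeGraph \ SimpleGraph.fromEdgeSet {s(parent (some (b, l)), some (b, l))}).Reachable u v) :
    (isDesc b l u ↔ isDesc b l v) := by
  obtain ⟨w⟩ := h
  induction w with
  | nil => rfl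
  | cons hadj p ih =>
    rw [SimpleGraph.sdiff_adj, SimpleGraph.fromEdgeSet_adj] at hadj
    refine (isDesc_iff_of_adj hadj.1 ?_).trans ih
    intro hmem
    exact hadj.2 ⟨by simp [hmem], hadj.1.ne⟩

lemma treeGraph_acyclic : treeGraph.IsAcyclic := by
  rw [isAcyclic_iff_forall_adj_isBridge]
  intro v w hadj
  have key : ∀ (b : Fin 3) (l : List (Fin 2)),
      ¬ (treeGraph \ SimpleGraph.fromEdgeSet
        {s(parent (some (b, l)), some (b, l))}).Reachable (parent (some (b, l))) (some (b, l)) := by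
    intro b l hr
    exact not_isDesc_parent b l ((isDesc_iff_of_reachable hr).mpr (isDesc_self b l))
  rcases depth_of_adj hadj with hd | hd
  · -- depth v = depth w + 1 : v is a child, w = parent v
    obtain ⟨b, l, rfl⟩ : ∃ b l, v = some (b, l) := by
      cases v with
      | none => simp [depth] at hd
      | some p => exact ⟨p.1, p.2, rfl⟩
    have hw : w = parent (some (b, l)) := eq_parent_of_adj hadj.symm (by omega)
    subst hw
    rw [Sym2.eq_swap, isBridge_iff]
    exact key b l
  · -- w is a child, v = parent w
    obtain ⟨b, l, rfl⟩ : ∃ b l, w = some (b, l) := by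
      cases w with
      | none => simp [depth] at hd
      | some p => exact ⟨p.1, p.2, rfl⟩
    have hv : v = parent (some (b, l)) := eq_parent_of_adj hadj (by omega)
    subst hv
    rw [isBridge_iff]
    exact key b l

lemma treeU_mem_Icc (v : TreeVertex) : treeU v ∈ Set.Icc (-2 : ℝ) 2 := by
  have key : ∀ L : ℕ, (0:ℝ) ≤ 2 - 1 / 2 ^ L ∧ (2:ℝ) - 1 / 2 ^ L ≤ 2 := by
    intro L
    have h1 : (0:ℝ) < 1 / 2 ^ L := by positivity
    have h2 : (1:ℝ) / 2 ^ L ≤ 1 := by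
      rw [div_le_one (by positivity)]
      exact one_le_pow₀ (by norm_num)
    constructor <;> linarith
  cases v with
  | none => simp [treeU]
  | some p =>
    obtain ⟨b, l⟩ := p
    obtain ⟨h1, h2⟩ := key l.length
    rcases fin3_cases b with rfl | rfl | rfl
    · simp [treeU]
    · have h : treeU (some (1, l)) = 2 - 1 / 2 ^ l.length := by
        simp [treeU, show (1:Fin 3) ≠ 0 by decide]
      rw [h, Set.mem_Icc]
      constructor <;> linarith
    · have h : treeU (some (2, l)) = -(2 - 1 / 2 ^ l.length) := by
        simp [treeU, show (2:Fin 3) ≠ 0 by decide, show (2:Fin 3) ≠ 1 by decide]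
      rw [h, Set.mem_Icc]
      constructor <;> linarith

/-- `treeGraph` is the infinite 3-regular tree (connected, acyclic,
3-regular), `treeU` is a non-constant harmonic function on it with values in `[−2,2]`,
and the Almgren quantity satisfies `N(k) = 8 − 3/2^{k−1}` for `k ≥ 1`; in particular
`N(k)` is non-negative, strictly increasing, and converges to `8`. -/
theorem tree_example :
    treeGraph.Connected ∧ treeGraph.IsAcyclic ∧
    (∀ v : TreeVertex, (treeGraph.neighborSet v).ncard = 3) ∧
    (∀ v : TreeVertex, ∑ᶠ y ∈ treeGraph.neighborSet v, (treeU y - treeU v) = 0) ∧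
    (∃ a b : TreeVertex, treeU a ≠ treeU b) ∧
    (∀ v : TreeVertex, treeU v ∈ Set.Icc (-2 : ℝ) 2) ∧
    (∀ k : ℕ, 1 ≤ k → treeN k = 8 - 3 / 2 ^ (k - 1)) ∧
    (∀ k : ℕ, 1 ≤ k → 0 ≤ treeN k ∧ treeN k < treeN (k + 1)) ∧
    Filter.Tendsto treeN Filter.atTop (nhds 8) := by
  refine ⟨treeGraph_connected, treeGraph_acyclic, ncard_nbhd, treeU_harmonic, ?_, treeU_mem_Icc,
    treeN_formula, ?_, ?_⟩
  · refine ⟨none, some (1, []), ?_⟩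
    simp [treeU, show (1:Fin 3) ≠ 0 by decide]
    norm_num
  · intro k hk
    rw [treeN_formula k hk, treeN_formula (k + 1) (by omega), Nat.add_sub_cancel]
    have h1 : (1:ℝ) ≤ 2 ^ (k - 1) := one_le_pow₀ (by norm_num)
    have h2 : (0:ℝ) < 2 ^ (k - 1) := by positivity
    have h3 : (0:ℝ) < 2 ^ k := by positivity
    have h4 : (2:ℝ) ^ (k - 1) < 2 ^ k := by
      apply pow_lt_pow_right₀ (by norm_num)
      omega
    constructor
    · have : (3:ℝ) / 2 ^ (k - 1) ≤ 3 := by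
        rw [div_le_iff₀ h2]; nlinarith
      linarith
    · have : (3:ℝ) / 2 ^ k < 3 / 2 ^ (k - 1) := by
        apply div_lt_div_of_pos_left (by norm_num) h2 h4
      linarith
  · have h0 : Filter.Tendsto (fun k : ℕ => (3:ℝ) / 2 ^ (k - 1)) Filter.atTop (nhds 0) := by
      have hp : Filter.Tendsto (fun k : ℕ => ((1:ℝ)/2) ^ k) Filter.atTop (nhds 0) :=
        tendsto_pow_atTop_nhds_zero_of_lt_one (by norm_num) (by norm_num)
      have hsub : Filter.Tendsto (fun k : ℕ => k - 1) Filter.atTop Filter.atTop :=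
        Filter.tendsto_sub_atTop_nat 1
      have := (hp.comp hsub).const_mul (3:ℝ)
      simpa [div_eq_mul_inv, one_div, inv_pow, Function.comp] using this
    have := h0.const_sub (8:ℝ)
    simp only [sub_zero] at this
    apply Filter.Tendsto.congr' _ this
    filter_upwards [Filter.eventually_ge_atTop 1] with k hk
    exact (treeN_formula k hk).symm
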